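/- Let q = 2^h with h ≥ 2, and let a₁₁, a₁₃, a₃₃ ∈ F_q with a₃₃ ∉ {0, a₁₃²} and Tr(a₁₁) = 0. Let C = {(x,y) ∈ F_q² : a₁₁x² + a₁₃x + y + a₃₃ = 0} and Δ̄ = {(x, a·x²) : x ∈ F_q, Tr(a) = 0}. Then |Δ̄ ∩ C| = q/2 − 1. -/

import Mathlib

section aux
variable {F : Type*} [Field F] [Fintype F] [Algebra (ZMod 2) F]

lemma trace_sq' (x : F) :
    Algebra.trace (ZMod 2) F (x ^ 2) = Algebra.trace (ZMod 2) F x := by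
  haveI : CharP F 2 := charP_of_injective_algebraMap (algebraMap (ZMod 2) F).injective 2
  let e : F ≃ₐ[ZMod 2] F := AlgEquiv.ofRingEquiv (f := frobeniusEquiv F 2)
    (fun c => by
      show (algebraMap (ZMod 2) F c) ^ 2 = algebraMap (ZMod 2) F c
      rw [← map_pow]; congr 1; fin_cases c <;> rfl)
  exact Algebra.trace_eq_of_algEquiv e x

lemma ker_trace_card {h : ℕ} (hh : 1 ≤ h) (hcard : Fintype.card F = 2 ^ h) :
    ({x : F | Algebra.trace (ZMod 2) F x = 0}).ncard = 2 ^ (h - 1) := by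
  classical
  set ℓ : F →ₗ[ZMod 2] ZMod 2 := Algebra.trace (ZMod 2) F
  have hsurj : Function.Surjective ℓ := Algebra.trace_surjective (ZMod 2) F
  have hfr : Module.finrank (ZMod 2) F = h := by
    have := Module.card_eq_pow_finrank (K := ZMod 2) (V := F)
    rw [hcard, ZMod.card] at this
    exact (Nat.pow_right_injective le_rfl this.symm)
  have hrange : Module.finrank (ZMod 2) (LinearMap.range ℓ) = 1 := by
    rw [LinearMap.range_eq_top.mpr hsurj]
    simp
  have hker : Module.finrank (ZMod 2) (LinearMap.ker ℓ) = h - 1 := by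
    have := LinearMap.finrank_range_add_finrank_ker ℓ
    omega
  have : Fintype.card (LinearMap.ker ℓ) = 2 ^ (h - 1) := by
    have := Module.card_eq_pow_finrank (K := ZMod 2) (V := LinearMap.ker ℓ)
    rw [ZMod.card, hker] at this
    exact this
  have hset : {x : F | Algebra.trace (ZMod 2) F x = 0} = (LinearMap.ker ℓ : Set F) := by
    ext x; simp [ℓ, LinearMap.mem_ker]
  rw [hset, ← Nat.card_coe_set_eq, Nat.card_eq_fintype_card]
  exact this

end aux

theorem stmt13 {F : Type*} [Field F] [Fintype F] [Algebra (ZMod 2) F]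
    {h : ℕ} (hh : 2 ≤ h) (hcard : Fintype.card F = 2 ^ h)
    (a11 a13 a33 : F) (h33 : a33 ≠ 0) (h33' : a33 ≠ a13 ^ 2)
    (htr : Algebra.trace (ZMod 2) F a11 = 0) :
    Set.ncard ({p : F × F | ∃ x a : F, Algebra.trace (ZMod 2) F a = 0 ∧
        p = (x, a * x ^ 2)} ∩
      {p : F × F | a11 * p.1 ^ 2 + a13 * p.1 + p.2 + a33 = 0}) = 2 ^ h / 2 - 1 := by
  classical
  haveI : CharP F 2 := charP_of_injective_algebraMap (algebraMap (ZMod 2) F).injective 2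
  have h2 : (2 : F) = 0 := by exact_mod_cast CharP.cast_eq_zero F 2
  obtain ⟨s, hs⟩ : ∃ s : F, s ^ 2 = a33 := ⟨(frobeniusEquiv F 2).symm a33,
    (frobeniusEquiv F 2).apply_symm_apply a33⟩
  set c : F := a13 + s with hc
  have hcne : c ≠ 0 := by
    intro hc0
    apply h33'
    have hsa : s = a13 := by linear_combination hc0 - a13 * h2
    rw [← hs, hsa]
  set T : Set F := {x : F | x ≠ 0 ∧ Algebra.trace (ZMod 2) F (c * x⁻¹) = 0} with hT
  set f : F → F × F := fun x => (x, a11 * x ^ 2 + a13 * x + a33) with hf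
  have key : ∀ x : F, x ≠ 0 → Algebra.trace (ZMod 2) F (a11 + a13 * x⁻¹ + a33 * (x⁻¹) ^ 2)
      = Algebra.trace (ZMod 2) F (c * x⁻¹) := by
    intro x hx
    have e1 : a11 + a13 * x⁻¹ + a33 * (x⁻¹) ^ 2 = a11 + (a13 * x⁻¹ + (s * x⁻¹) ^ 2) := by
      rw [← hs]; ring
    rw [e1, map_add, map_add, htr, zero_add, trace_sq', ← map_add]
    congr 1
    rw [hc]; ring
  have hset : ({p : F × F | ∃ x a : F, Algebra.trace (ZMod 2) F a = 0 ∧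
        p = (x, a * x ^ 2)} ∩
      {p : F × F | a11 * p.1 ^ 2 + a13 * p.1 + p.2 + a33 = 0}) = f '' T := by
    ext p
    constructor
    · rintro ⟨⟨x, a, ha, rfl⟩, hC⟩
      simp only [Set.mem_setOf_eq] at hC
      have hx : x ≠ 0 := by
        intro h0
        apply h33
        rw [h0] at hC
        linear_combination hC
      have hax2 : a * x ^ 2 = a11 * x ^ 2 + a13 * x + a33 := by
        linear_combination hC - (a11 * x ^ 2 + a13 * x + a33) * h2
      refine ⟨x, ⟨hx, ?_⟩, ?_⟩
      · have hax : a = a11 + a13 * x⁻¹ + a33 * (x⁻¹) ^ 2 := by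
          field_simp
          linear_combination hax2
        rw [← key x hx, ← hax]
        exact ha
      · rw [hf]
        simp [hax2]
    · rintro ⟨x, ⟨hx, htrx⟩, rfl⟩
      constructor
      · refine ⟨x, a11 + a13 * x⁻¹ + a33 * (x⁻¹) ^ 2, by rw [key x hx]; exact htrx, ?_⟩
        simp only [hf, Prod.mk.injEq, true_and]
        field_simp
      · show a11 * x ^ 2 + a13 * x + (a11 * x ^ 2 + a13 * x + a33) + a33 = 0
        linear_combination (a11 * x ^ 2 + a13 * x + a33) * h2
  rw [hset]
  have hinj : Set.InjOn f T := fun x _ y _ hxy => congrArg Prod.fst hxy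
  rw [Set.ncard_image_of_injOn hinj]
  have himg : (fun x : F => c * x⁻¹) '' T
      = {u : F | u ≠ 0 ∧ Algebra.trace (ZMod 2) F u = 0} := by
    ext u
    constructor
    · rintro ⟨x, ⟨hx, htrx⟩, rfl⟩
      exact ⟨mul_ne_zero hcne (inv_ne_zero hx), htrx⟩
    · rintro ⟨hu, htru⟩
      have hcu : c * (c * u⁻¹)⁻¹ = u := by field_simp
      exact ⟨c * u⁻¹, ⟨mul_ne_zero hcne (inv_ne_zero hu), by rw [hcu]; exact htru⟩, hcu⟩
  have hinj2 : Set.InjOn (fun x : F => c * x⁻¹) T := by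
    intro x hx y hy hxy
    simp only at hxy
    exact inv_injective (mul_left_cancel₀ hcne hxy)
  have hTcard : T.ncard = {u : F | u ≠ 0 ∧ Algebra.trace (ZMod 2) F u = 0}.ncard := by
    rw [← himg, Set.ncard_image_of_injOn hinj2]
  rw [hTcard]
  have hins : {u : F | Algebra.trace (ZMod 2) F u = 0}
      = insert (0 : F) {u : F | u ≠ 0 ∧ Algebra.trace (ZMod 2) F u = 0} := by
    ext u
    simp only [Set.mem_setOf_eq, Set.mem_insert_iff]
    constructor
    · intro hu
      by_cases h0 : u = 0
      · exact Or.inl h0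
      · exact Or.inr ⟨h0, hu⟩
    · rintro (rfl | ⟨_, hu⟩)
      · simp
      · exact hu
  have hcount := ker_trace_card (F := F) (le_trans one_le_two hh) hcard
  rw [hins, Set.ncard_insert_of_notMem (by simp) (Set.toFinite _)] at hcount
  have hpow : 2 ^ h = 2 ^ (h - 1) * 2 := by
    rw [← pow_succ]
    congr 1
    omega
  omega
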